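/- Least-resolved trees explaining (δ, ε) subject to constraints (C1) and (C2) are not unique in general: there is a doubly labeled tree (T, t, λ) explaining some (δ, ε) and satisfying (C1) and (C2), containing consecutive inner edges uv and vw with t(u)=t(v)=t(w), λ({u,v}) = λ({v,w}) = ∅, such that contracting either one of uv, vw preserves explanation of (δ,ε) and conditions (C1),(C2), but contracting both does not. -/

import Mathlib

/-- A rooted phylogenetic tree with leaf set `L`: a finite vertex type `V`,
a root, a parent map (the root is its own parent), every vertex reaches the
root by iterating `parent`, the leaves are exactly the vertices without
children and are in bijection with `L`, and every inner vertex has at least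
two children. -/
structure PhyloTree (L : Type) : Type 1 where
  V : Type
  fintypeV : Fintype V
  root : V
  parent : V → V
  leaf : L → V
  parent_root : parent root = root
  reach : ∀ v : V, ∃ n : ℕ, parent^[n] v = root
  leaf_inj : Function.Injective leaf
  leaf_iff : ∀ v : V, (∀ u : V, parent u = v → u = v) ↔ ∃ x : L, leaf x = v
  phylo : ∀ v : V, (¬ ∃ x : L, leaf x = v) →
      ∃ u u' : V, u ≠ u' ∧ parent u = v ∧ parent u' = v ∧ u ≠ v ∧ u' ≠ v

namespace PhyloTree

variable {L : Type} (T : PhyloTree L)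

/-- `v` is an ancestor (or equal) of `w`. -/
def anc (v w : T.V) : Prop := ∃ n : ℕ, T.parent^[n] w = v

def isLeaf (v : T.V) : Prop := ∃ x : L, T.leaf x = v

/-- The cluster `L(T(v))`: the set of leaves below `v`. -/
def cluster (v : T.V) : Set L := {x : L | T.anc v (T.leaf x)}

/-- The cluster system `H(T)`. -/
def clusters : Set (Set L) := Set.range T.cluster

/-- `w` is the last common ancestor of the leaves `x` and `y`. -/
def isLCA (x y : L) (w : T.V) : Prop :=
  T.anc w (T.leaf x) ∧ T.anc w (T.leaf y) ∧
    ∀ u : T.V, T.anc u (T.leaf x) → T.anc u (T.leaf y) → T.anc u w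

/-- `u` is a child of `v`. -/
def childOf (u v : T.V) : Prop := T.parent u = v ∧ u ≠ v

/-- The edge `{parent u, u}` (encoded by its lower endpoint `u`) is an inner edge. -/
def innerEdge (u : T.V) : Prop := T.parent u ≠ u ∧ ¬ T.isLeaf u

/-- The edge `{parent u, u}` lies on the path from the vertex `w` down to the leaf `y`. -/
def onPath (w : T.V) (y : L) (u : T.V) : Prop :=
  T.anc w u ∧ u ≠ w ∧ T.anc u (T.leaf y)

/-- The vertex-labeled tree `(T,t)` explains `δ`. -/
def ExplainsDelta {M : Type} (t : T.V → M) (δ : L → L → M) : Prop :=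
  ∀ x y : L, x ≠ y → ∀ w : T.V, T.isLCA x y w → t w = δ x y

/-- The edge-labeled tree `(T,λ)` explains `ε`; edge labels are encoded on the
lower endpoint of each edge. -/
def ExplainsEps {N : Type} (lam : T.V → Finset N) (ε : L → L → Finset N) : Prop :=
  ∀ x y : L, x ≠ y → ∀ w : T.V, T.isLCA x y w →
    ∀ k : N, k ∈ ε x y ↔ ∃ u : T.V, T.onPath w y u ∧ k ∈ lam u

/-- The vertex labeling is discriminating: the endpoints of every inner edge
carry distinct labels. -/
def Discriminating {M : Type} (t : T.V → M) : Prop :=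
  ∀ u : T.V, T.innerEdge u → t u ≠ t (T.parent u)

/-- Total number of labels over all edges, `Σ_{e ∈ E(T)} |λ(e)|`. -/
noncomputable def labelSum {N : Type} (lam : T.V → Finset N) : ℕ :=
  letI := T.fintypeV
  letI := Classical.decEq T.V
  ∑ v : T.V, if T.parent v = v then 0 else (lam v).card

/-- Condition (C): every inner vertex has a child joined by an empty-labeled edge. -/
def CondC {N : Type} (lam : T.V → Finset N) : Prop :=
  ∀ v : T.V, ¬ T.isLeaf v → ∃ u : T.V, T.childOf u v ∧ lam u = ∅

/-- Condition (C1): if `t(v) ∈ M₀` then all edges from `v` to its children are empty. -/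
def CondC1 {M N : Type} (t : T.V → M) (lam : T.V → Finset N) (M0 : Set M) : Prop :=
  ∀ v u : T.V, T.childOf u v → t v ∈ M0 → lam u = ∅

/-- Condition (C2): at every vertex, at most one edge to a child is nonempty. -/
def CondC2 {N : Type} (lam : T.V → Finset N) : Prop :=
  ∀ v u u' : T.V, T.childOf u v → T.childOf u' v → lam u ≠ ∅ → lam u' ≠ ∅ → u = u'

/-- `(T1,λ1) ≤ (T2,λ2)`: the edge-labeled tree `(T2,λ2)` refines `(T1,λ1)`. -/
def LeLabeled {N : Type} (T1 : PhyloTree L) (lam1 : T1.V → Finset N)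
    (T2 : PhyloTree L) (lam2 : T2.V → Finset N) : Prop :=
  T1.clusters ⊆ T2.clusters ∧
    ∀ (v1 : T1.V) (v2 : T2.V), T1.parent v1 ≠ v1 → T2.parent v2 ≠ v2 →
      T1.cluster v1 = T2.cluster v2 → lam1 v1 ⊆ lam2 v2

/-- `φ` witnesses that `T'` is obtained from `T` by contracting the inner edge
`{parent u, u}`. -/
def IsContractionMap (T : PhyloTree L) (u : T.V) (T' : PhyloTree L)
    (φ : T.V → T'.V) : Prop :=
  T.innerEdge u ∧ Function.Surjective φ ∧ φ u = φ (T.parent u) ∧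
    (∀ a b : T.V, φ a = φ b →
      a = b ∨ (a = u ∧ b = T.parent u) ∨ (b = u ∧ a = T.parent u)) ∧
    (∀ v : T.V, v ≠ u → T'.parent (φ v) = φ (T.parent v)) ∧
    (∀ x : L, φ (T.leaf x) = T'.leaf x) ∧ φ T.root = T'.root

/-- `T'` is obtained from `T` by contracting the inner edge `{parent u, u}`. -/
def ContractEdge (T : PhyloTree L) (u : T.V) (T' : PhyloTree L) : Prop :=
  ∃ φ : T.V → T'.V, IsContractionMap T u T' φ

/-- Isomorphism of rooted trees on the same leaf set. -/
def Isomorphic (T1 T2 : PhyloTree L) : Prop :=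
  ∃ φ : T1.V ≃ T2.V, (∀ v : T1.V, φ (T1.parent v) = T2.parent (φ v)) ∧
    ∀ x : L, φ (T1.leaf x) = T2.leaf x

def IsSymbolicUltrametric {M : Type} (δ : L → L → M) : Prop :=
  ∃ (T : PhyloTree L) (t : T.V → M), T.ExplainsDelta t δ

def IsFitchMap {N : Type} (ε : L → L → Finset N) : Prop :=
  ∃ (T : PhyloTree L) (lam : T.V → Finset N), T.ExplainsEps lam ε

def TreeLike {M N : Type} (δ : L → L → M) (ε : L → L → Finset N) : Prop :=
  ∃ (T : PhyloTree L) (t : T.V → M) (lam : T.V → Finset N),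
    T.ExplainsDelta t δ ∧ T.ExplainsEps lam ε

def MTreeLike {M N : Type} (δ : L → L → M) (ε : L → L → Finset N) (M0 : Set M) : Prop :=
  ∃ (T : PhyloTree L) (t : T.V → M) (lam : T.V → Finset N),
    T.ExplainsDelta t δ ∧ T.ExplainsEps lam ε ∧ T.CondC lam ∧ T.CondC1 t lam M0

end PhyloTree

/-- A hierarchy on `L`. -/
def IsHierarchy {L : Type} (H : Set (Set L)) : Prop :=
  Set.univ ∈ H ∧ (∀ x : L, {x} ∈ H) ∧
    (∀ A ∈ H, ∀ B ∈ H, A ∩ B = A ∨ A ∩ B = B ∨ A ∩ B = (∅ : Set L)) ∧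
    (∅ : Set L) ∉ H
section AuxGeneral

namespace PhyloTree

variable {L : Type} {T : PhyloTree L}

theorem anc_refl (v : T.V) : T.anc v v := ⟨0, rfl⟩

theorem anc_root (v : T.V) : T.anc T.root v := T.reach v

theorem anc_trans {a b c : T.V} (h1 : T.anc a b) (h2 : T.anc b c) : T.anc a c := by
  obtain ⟨m, hm⟩ := h1; obtain ⟨n, hn⟩ := h2
  exact ⟨m + n, by rw [Function.iterate_add_apply, hn, hm]⟩

theorem periodic_eq_root {p : ℕ} {v : T.V} (h : T.parent^[p] v = v) (hp : 0 < p) :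
    v = T.root := by
  obtain ⟨n, hn⟩ := T.reach v
  have key : ∀ t : ℕ, T.parent^[t * p] v = v := by
    intro t
    induction t with
    | zero => simp
    | succ t ih => rw [Nat.succ_mul, Function.iterate_add_apply, h, ih]
  have hnp : n ≤ n * p := Nat.le_mul_of_pos_right n hp
  have : T.parent^[n * p] v = T.root := by
    have : n * p = (n * p - n) + n := by omega
    rw [this, Function.iterate_add_apply, hn, Function.iterate_fixed T.parent_root]
  rw [key n] at this
  exact this

theorem anc_antisymm {a b : T.V} (h1 : T.anc a b) (h2 : T.anc b a) : a = b := by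
  obtain ⟨m, hm⟩ := h1; obtain ⟨n, hn⟩ := h2
  rcases Nat.eq_zero_or_pos (m + n) with h | h
  · have hm0 : m = 0 := by omega
    rw [hm0] at hm; exact hm.symm
  · have hper : T.parent^[m + n] a = a := by
      rw [Function.iterate_add_apply, hn, hm]
    have ha : a = T.root := periodic_eq_root hper h
    have hb : b = T.root := by
      rw [← hn, ha, Function.iterate_fixed T.parent_root]
    rw [ha, hb]

theorem anc_comparable {a b z : T.V} (h1 : T.anc a z) (h2 : T.anc b z) :
    T.anc a b ∨ T.anc b a := by
  obtain ⟨m, hm⟩ := h1; obtain ⟨n, hn⟩ := h2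
  rcases le_total m n with h | h
  · right
    refine ⟨n - m, ?_⟩
    have : n = (n - m) + m := by omega
    rw [← hm, ← Function.iterate_add_apply, ← this, hn]
  · left
    refine ⟨m - n, ?_⟩
    have : m = (m - n) + n := by omega
    rw [← hn, ← Function.iterate_add_apply, ← this, hm]

theorem leaf_anc {x : L} {w : T.V} (h : T.anc (T.leaf x) w) : w = T.leaf x := by
  obtain ⟨n, hn⟩ := h
  induction n with
  | zero => exact hn
  | succ n ih =>
    rw [Function.iterate_succ_apply'] at hn
    have := (T.leaf_iff (T.leaf x)).mpr ⟨x, rfl⟩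
    exact ih (this _ hn)

theorem cluster_leaf (x : L) : T.cluster (T.leaf x) = {x} := by
  ext y
  constructor
  · intro h
    exact T.leaf_inj (leaf_anc h)
  · rintro rfl
    exact anc_refl _

theorem cluster_root : T.cluster T.root = Set.univ :=
  Set.eq_univ_of_forall fun _ => anc_root _

theorem fixed_eq_root {v : T.V} (h : T.parent v = v) : v = T.root := by
  obtain ⟨n, hn⟩ := T.reach v
  rw [Function.iterate_fixed h] at hn
  exact hn

end PhyloTree

end AuxGeneral

section AuxDepth

namespace PhyloTree

variable {L : Type} {T : PhyloTree L}

open Classical in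
/-- Distance to the root. -/
noncomputable def dd (T : PhyloTree L) (v : T.V) : ℕ :=
  Nat.find (T.reach v)

open Classical in
theorem dd_spec (v : T.V) : T.parent^[T.dd v] v = T.root := Nat.find_spec (T.reach v)

open Classical in
theorem dd_min {v : T.V} {n : ℕ} (h : T.parent^[n] v = T.root) : T.dd v ≤ n :=
  Nat.find_min' (T.reach v) h

theorem dd_root : T.dd T.root = 0 :=
  Nat.le_zero.mp (dd_min (by simp))

theorem dd_eq_zero {v : T.V} (h : T.dd v = 0) : v = T.root := by
  have := dd_spec (T := T) v
  rwa [h] at this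

theorem dd_child {u v : T.V} (hu : T.parent u = v) (hne : u ≠ v) : T.dd v < T.dd u := by
  have hur : u ≠ T.root := by
    rintro rfl
    exact hne (by rw [← hu, T.parent_root])
  have h1 : 1 ≤ T.dd u := by
    rcases Nat.eq_zero_or_pos (T.dd u) with h | h
    · exact absurd (dd_eq_zero h) hur
    · exact h
  have : T.parent^[T.dd u - 1] v = T.root := by
    have := dd_spec (T := T) u
    have heq : T.dd u = (T.dd u - 1) + 1 := by omega
    rw [heq, Function.iterate_succ_apply, hu] at this
    exact this
  have := dd_min this
  omega

theorem dd_lt_card (v : T.V) :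
    letI := T.fintypeV
    T.dd v < Fintype.card T.V := by
  letI := T.fintypeV
  have hinj : Function.Injective (fun k : Fin (T.dd v + 1) => T.parent^[k.1] v) := by
    have key : ∀ i j : ℕ, i < j → j ≤ T.dd v → T.parent^[i] v = T.parent^[j] v → False := by
      intro i j hij hj h
      have : T.parent^[(T.dd v - j) + i] v = T.root := by
        have h1 : T.parent^[(T.dd v - j) + j] v = T.root := by
          have : (T.dd v - j) + j = T.dd v := by omega
          rw [this]; exact dd_spec v
        rw [Function.iterate_add_apply] at h1 ⊢
        rw [← h] at h1
        exact h1
      have := dd_min this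
      omega
    intro i j hij
    by_contra hne
    rcases lt_or_gt_of_ne (fun h : i = j => hne h) with h | h
    · exact key i.1 j.1 h (by omega) hij
    · exact key j.1 i.1 h (by omega) hij.symm
  have := Fintype.card_le_of_injective _ hinj
  simpa using this

theorem exists_leaf_below (v : T.V) : ∃ x : L, T.anc v (T.leaf x) := by
  letI := T.fintypeV
  have H : ∀ n : ℕ, ∀ v : T.V, Fintype.card T.V - T.dd v ≤ n → ∃ x : L, T.anc v (T.leaf x) := by
    intro n
    induction n with
    | zero =>
      intro v hv
      have := dd_lt_card (T := T) v
      omega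
    | succ n ih =>
      intro v hv
      by_cases hlf : ∃ x : L, T.leaf x = v
      · obtain ⟨x, hx⟩ := hlf
        exact ⟨x, hx ▸ anc_refl _⟩
      · obtain ⟨u, u', hne, hu, hu', huv, hu'v⟩ := T.phylo v hlf
        have hd := dd_child hu huv
        obtain ⟨x, m, hm⟩ := ih u (by omega)
        refine ⟨x, m + 1, ?_⟩
        rw [Function.iterate_succ_apply', hm, hu]
  exact H (Fintype.card T.V) v (by omega)

theorem child_anc_child {u u' v : T.V} (hu : T.parent u = v) (hune : u ≠ v)
    (hu' : T.parent u' = v) (h : T.anc u u') : u = u' := by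
  obtain ⟨k, hk⟩ := h
  rcases Nat.eq_zero_or_pos k with h0 | h0
  · rw [h0] at hk; exact hk.symm
  · exfalso
    have hk1 : T.parent^[k - 1] v = u := by
      have : k = (k - 1) + 1 := by omega
      rw [this, Function.iterate_succ_apply, hu'] at hk
      exact hk
    have hper : T.parent^[k] v = v := by
      have : k = (k - 1) + 1 := by omega
      rw [this, Function.iterate_succ_apply', hk1, hu]
    have hv : v = T.root := periodic_eq_root hper h0
    have : u = T.root := by
      rw [← hk1, hv, Function.iterate_fixed T.parent_root]
    exact hune (this.trans hv.symm)

theorem two_leaves {v : T.V} (h : ¬ T.isLeaf v) :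
    ∃ x y : L, x ≠ y ∧ T.anc v (T.leaf x) ∧ T.anc v (T.leaf y) := by
  obtain ⟨u, u', hne, hu, hu', huv, hu'v⟩ := T.phylo v h
  obtain ⟨x, hx⟩ := exists_leaf_below u
  obtain ⟨y, hy⟩ := exists_leaf_below u'
  have hvu : T.anc v u := ⟨1, by simpa using hu⟩
  have hvu' : T.anc v u' := ⟨1, by simpa using hu'⟩
  refine ⟨x, y, ?_, anc_trans hvu hx, anc_trans hvu' hy⟩
  rintro rfl
  rcases anc_comparable hx hy with hc | hc
  · exact hne (child_anc_child hu huv hu' hc)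
  · exact hne (child_anc_child hu' hu'v hu hc).symm

theorem lca_exists (x y : L) : ∃ w : T.V, T.isLCA x y w := by
  letI := T.fintypeV
  classical
  set A : Set T.V := {u | T.anc u (T.leaf x) ∧ T.anc u (T.leaf y)} with hA
  have hroot : T.root ∈ A := ⟨anc_root _, anc_root _⟩
  obtain ⟨w, hwA, hmax⟩ :=
    Set.Finite.exists_maximalFor T.dd A (Set.toFinite A) ⟨_, hroot⟩
  refine ⟨w, hwA.1, hwA.2, ?_⟩
  intro u hu1 hu2
  have huA : u ∈ A := ⟨hu1, hu2⟩
  rcases anc_comparable hu1 hwA.1 with hc | hc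
  · exact hc
  · obtain ⟨k, hk⟩ := hc
    by_cases hkd : k ≤ T.dd u
    · have : T.parent^[T.dd u - k] w = T.root := by
        have h1 : T.parent^[(T.dd u - k) + k] u = T.root := by
          have : (T.dd u - k) + k = T.dd u := by omega
          rw [this]; exact dd_spec u
        rw [Function.iterate_add_apply, hk] at h1
        exact h1
      have hdw : T.dd w ≤ T.dd u - k := dd_min this
      have heq := hmax huA (by omega)
      have hk0 : k = 0 := by omega
      rw [hk0] at hk
      exact hk ▸ anc_refl u
    · have hwr : w = T.root := by
        rw [← hk]
        have : k = (k - T.dd u) + T.dd u := by omega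
        rw [this, Function.iterate_add_apply, dd_spec, Function.iterate_fixed T.parent_root]
      have hdw : T.dd w = 0 := by rw [hwr]; exact dd_root
      have := hmax huA (by omega)
      have : u = T.root := dd_eq_zero (by omega)
      rw [this, ← hwr]
      exact anc_refl w

theorem anc_iff_bdd {Nb : ℕ} (h : ∀ x : T.V, T.parent^[Nb] x = T.root) (v w : T.V) :
    T.anc v w ↔ ∃ n : Fin (Nb + 1), T.parent^[n.1] w = v := by
  constructor
  · rintro ⟨n, rfl⟩
    by_cases hn : n ≤ Nb
    · exact ⟨⟨n, by omega⟩, rfl⟩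
    · refine ⟨⟨Nb, by omega⟩, ?_⟩
      have : T.parent^[n] w = T.root := by
        have : n = (n - Nb) + Nb := by omega
        rw [this, Function.iterate_add_apply, h, Function.iterate_fixed T.parent_root]
      rw [this, h]
  · rintro ⟨n, hn⟩
    exact ⟨n.1, hn⟩

end PhyloTree

end AuxDepth

section Concrete

set_option synthInstance.maxSize 2000
set_option synthInstance.maxHeartbeats 1000000
set_option maxHeartbeats 1000000

open PhyloTree

/-- The big tree: 0 = u (root), 1 = v, 2 = w, 3 = leaf a, 4 = leaf b,
5 = leaf c, 6 = leaf d. -/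
@[reducible] def Tbig : PhyloTree (Fin 4) where
  V := Fin 7
  fintypeV := inferInstance
  root := 0
  parent := ![0, 0, 1, 0, 1, 2, 2]
  leaf := ![3, 4, 5, 6]
  parent_root := rfl
  reach := fun v => ⟨3, by revert v; decide⟩
  leaf_inj := by decide
  leaf_iff := by decide
  phylo := by decide

@[reducible] def Tone : PhyloTree (Fin 4) where
  V := Fin 6
  fintypeV := inferInstance
  root := 0
  parent := ![0, 0, 0, 0, 1, 1]
  leaf := ![2, 3, 4, 5]
  parent_root := rfl
  reach := fun v => ⟨2, by revert v; decide⟩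
  leaf_inj := by decide
  leaf_iff := by decide
  phylo := by decide

@[reducible] def Ttwo : PhyloTree (Fin 4) where
  V := Fin 6
  fintypeV := inferInstance
  root := 0
  parent := ![0, 0, 0, 1, 1, 1]
  leaf := ![2, 3, 4, 5]
  parent_root := rfl
  reach := fun v => ⟨2, by revert v; decide⟩
  leaf_inj := by decide
  leaf_iff := by decide
  phylo := by decide

@[reducible] def epsEx : Fin 4 → Fin 4 → Finset Unit := fun _ y =>
  if y = 0 ∨ y = 2 then {()} else ∅

@[reducible] def lamBig : Tbig.V → Finset Unit := ![∅, ∅, ∅, {()}, ∅, {()}, ∅]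
@[reducible] def lamOne : Tone.V → Finset Unit := ![∅, ∅, {()}, ∅, {()}, ∅]
@[reducible] def lamTwo : Ttwo.V → Finset Unit := ![∅, ∅, {()}, ∅, {()}, ∅]

theorem hbig3 : ∀ v : Tbig.V, Tbig.parent^[3] v = Tbig.root := by decide

theorem hone2 : ∀ v : Tone.V, Tone.parent^[2] v = Tone.root := by decide

theorem htwo2 : ∀ v : Ttwo.V, Ttwo.parent^[2] v = Ttwo.root := by decide

theorem anc_big (v w : Tbig.V) :
    Tbig.anc v w ↔ ∃ n : Fin 4, Tbig.parent^[n.1] w = v := anc_iff_bdd hbig3 v w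

theorem anc_one (v w : Tone.V) :
    Tone.anc v w ↔ ∃ n : Fin 3, Tone.parent^[n.1] w = v := anc_iff_bdd hone2 v w

theorem anc_two (v w : Ttwo.V) :
    Ttwo.anc v w ↔ ∃ n : Fin 3, Ttwo.parent^[n.1] w = v := anc_iff_bdd htwo2 v w

theorem expl_big : Tbig.ExplainsEps lamBig epsEx := by
  simp only [PhyloTree.ExplainsEps, PhyloTree.isLCA, PhyloTree.onPath, anc_big]
  decide

theorem expl_one : Tone.ExplainsEps lamOne epsEx := by
  simp only [PhyloTree.ExplainsEps, PhyloTree.isLCA, PhyloTree.onPath, anc_one]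
  decide

theorem expl_two : Ttwo.ExplainsEps lamTwo epsEx := by
  simp only [PhyloTree.ExplainsEps, PhyloTree.isLCA, PhyloTree.onPath, anc_two]
  decide

theorem c2_big : Tbig.CondC2 lamBig := by
  simp only [PhyloTree.CondC2, PhyloTree.childOf]
  decide

theorem c2_one : Tone.CondC2 lamOne := by
  simp only [PhyloTree.CondC2, PhyloTree.childOf]
  decide

theorem c2_two : Ttwo.CondC2 lamTwo := by
  simp only [PhyloTree.CondC2, PhyloTree.childOf]
  decide

@[reducible] def phiOne : Tbig.V → Tone.V := ![0, 0, 1, 2, 3, 4, 5]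
@[reducible] def phiTwo : Tbig.V → Ttwo.V := ![0, 1, 1, 2, 3, 4, 5]

theorem contract_one : PhyloTree.ContractEdge Tbig 1 Tone := by
  refine ⟨phiOne, ⟨by decide, ?_⟩, by decide, by decide, by decide, by decide, by decide,
    by decide⟩
  simp only [PhyloTree.isLeaf]
  decide

theorem contract_two : PhyloTree.ContractEdge Tbig 2 Ttwo := by
  refine ⟨phiTwo, ⟨by decide, ?_⟩, by decide, by decide, by decide, by decide, by decide,
    by decide⟩
  simp only [PhyloTree.isLeaf]
  decide

end Concrete

section Clusters

open PhyloTree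

set_option synthInstance.maxSize 2000
set_option synthInstance.maxHeartbeats 1000000
set_option maxHeartbeats 1000000

theorem clus0 : Tbig.cluster 0 = Set.univ := by
  ext x
  simp only [PhyloTree.cluster, Set.mem_setOf_eq, anc_big, Set.mem_univ, iff_true]
  revert x; decide

theorem clus1 : Tbig.cluster 1 = {1, 2, 3} := by
  ext x
  simp only [PhyloTree.cluster, Set.mem_setOf_eq, anc_big, Set.mem_insert_iff,
    Set.mem_singleton_iff]
  revert x; decide

theorem clus2 : Tbig.cluster 2 = {2, 3} := by
  ext x
  simp only [PhyloTree.cluster, Set.mem_setOf_eq, anc_big, Set.mem_insert_iff,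
    Set.mem_singleton_iff]
  revert x; decide

theorem clus3 : Tbig.cluster 3 = {0} := by
  ext x
  simp only [PhyloTree.cluster, Set.mem_setOf_eq, anc_big, Set.mem_singleton_iff]
  revert x; decide

theorem clus4 : Tbig.cluster 4 = {1} := by
  ext x
  simp only [PhyloTree.cluster, Set.mem_setOf_eq, anc_big, Set.mem_singleton_iff]
  revert x; decide

theorem clus5 : Tbig.cluster 5 = {2} := by
  ext x
  simp only [PhyloTree.cluster, Set.mem_setOf_eq, anc_big, Set.mem_singleton_iff]
  revert x; decide

theorem clus6 : Tbig.cluster 6 = {3} := by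
  ext x
  simp only [PhyloTree.cluster, Set.mem_setOf_eq, anc_big, Set.mem_singleton_iff]
  revert x; decide

def Sstar : Set (Set (Fin 4)) := {Set.univ, {0}, {1}, {2}, {3}}

theorem ne_of_wit {α : Type} {A B : Set α} (x : α) (hx : x ∈ A) (hx' : x ∉ B) : A ≠ B :=
  fun h => hx' (h ▸ hx)

theorem hdiff : Tbig.clusters \ {Tbig.cluster 1, Tbig.cluster 2} = Sstar := by
  have d1 : (Set.univ : Set (Fin 4)) ≠ {1, 2, 3} :=
    ne_of_wit 0 (Set.mem_univ _) (by simp)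
  have d2 : (Set.univ : Set (Fin 4)) ≠ {2, 3} :=
    ne_of_wit 0 (Set.mem_univ _) (by simp)
  have d3 : ({0} : Set (Fin 4)) ≠ {1, 2, 3} := ne_of_wit 0 rfl (by simp)
  have d4 : ({0} : Set (Fin 4)) ≠ {2, 3} := ne_of_wit 0 rfl (by simp)
  have d5 : ({1} : Set (Fin 4)) ≠ {1, 2, 3} :=
    fun h => by have : (2 : Fin 4) ∈ ({1} : Set (Fin 4)) := h ▸ (by simp); simp at this
  have d6 : ({1} : Set (Fin 4)) ≠ {2, 3} := ne_of_wit 1 rfl (by simp)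
  have d7 : ({2} : Set (Fin 4)) ≠ {1, 2, 3} :=
    fun h => by have : (1 : Fin 4) ∈ ({2} : Set (Fin 4)) := h ▸ (by simp); simp at this
  have d8 : ({2} : Set (Fin 4)) ≠ {2, 3} :=
    fun h => by have : (3 : Fin 4) ∈ ({2} : Set (Fin 4)) := h ▸ (by simp); simp at this
  have d9 : ({3} : Set (Fin 4)) ≠ {1, 2, 3} :=
    fun h => by have : (1 : Fin 4) ∈ ({3} : Set (Fin 4)) := h ▸ (by simp); simp at this
  have d10 : ({3} : Set (Fin 4)) ≠ {2, 3} :=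
    fun h => by have : (2 : Fin 4) ∈ ({3} : Set (Fin 4)) := h ▸ (by simp); simp at this
  ext A
  simp only [Set.mem_diff, PhyloTree.clusters, Set.mem_range, Set.mem_insert_iff,
    Set.mem_singleton_iff, not_or, clus1, clus2, Sstar]
  constructor
  · rintro ⟨⟨v, rfl⟩, hn1, hn2⟩
    fin_cases v
    · exact Or.inl clus0
    · exact absurd clus1 hn1
    · exact absurd clus2 hn2
    · exact Or.inr (Or.inl clus3)
    · exact Or.inr (Or.inr (Or.inl clus4))
    · exact Or.inr (Or.inr (Or.inr (Or.inl clus5)))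
    · exact Or.inr (Or.inr (Or.inr (Or.inr clus6)))
  · rintro (rfl | rfl | rfl | rfl | rfl)
    · exact ⟨⟨0, clus0⟩, d1, d2⟩
    · exact ⟨⟨3, clus3⟩, d3, d4⟩
    · exact ⟨⟨4, clus4⟩, d5, d6⟩
    · exact ⟨⟨5, clus5⟩, d7, d8⟩
    · exact ⟨⟨6, clus6⟩, d9, d10⟩

end Clusters

section NoT3

open PhyloTree

theorem no_T3 (T3 : PhyloTree (Fin 4)) (l3 : T3.V → Finset Unit)
    (hclus : T3.clusters = Sstar) (hE : T3.ExplainsEps l3 epsEx) (hC2 : T3.CondC2 l3) :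
    False := by
  classical
  have hmem : ∀ v : T3.V, T3.cluster v = Set.univ ∨ ∃ i : Fin 4, T3.cluster v = {i} := by
    intro v
    have hv : T3.cluster v ∈ Sstar := hclus ▸ ⟨v, rfl⟩
    simp only [Sstar, Set.mem_insert_iff, Set.mem_singleton_iff] at hv
    rcases hv with h | h | h | h | h
    · exact Or.inl h
    all_goals exact Or.inr ⟨_, h⟩
  have huniv : ∀ v : T3.V, ¬ T3.isLeaf v → T3.cluster v = Set.univ := by
    intro v hv
    obtain ⟨x, y, hxy, hx, hy⟩ := two_leaves hv
    rcases hmem v with h | ⟨i, h⟩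
    · exact h
    · exfalso
      have hxi : x ∈ T3.cluster v := hx
      have hyi : y ∈ T3.cluster v := hy
      rw [h, Set.mem_singleton_iff] at hxi hyi
      exact hxy (hxi.trans hyi.symm)
  have hleafcl : ∀ x : Fin 4, T3.cluster (T3.leaf x) = {x} := fun x => cluster_leaf x
  have hsinguniv : ∀ i : Fin 4, ({i} : Set (Fin 4)) ≠ Set.univ := by
    intro i h
    have h0 : (0 : Fin 4) ∈ ({i} : Set (Fin 4)) := h.symm ▸ Set.mem_univ _
    have h1 : (1 : Fin 4) ∈ ({i} : Set (Fin 4)) := h.symm ▸ Set.mem_univ _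
    rw [Set.mem_singleton_iff] at h0 h1
    exact absurd (h0.trans h1.symm) (by decide)
  have hsing : ∀ (v : T3.V) (i : Fin 4), T3.cluster v = {i} → v = T3.leaf i := by
    intro v i h
    by_cases hv : T3.isLeaf v
    · obtain ⟨x, rfl⟩ := hv
      have hx : ({x} : Set (Fin 4)) = {i} := (hleafcl x).symm.trans h
      have hxi : x = i := by rwa [Set.singleton_eq_singleton_iff] at hx
      rw [hxi]
    · rw [huniv v hv] at h
      exact absurd h.symm (hsinguniv i)
  have force : ∀ y : Fin 4, y = 0 ∨ y = 2 → () ∈ l3 (T3.leaf y) := by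
    intro y hy
    obtain ⟨z, hz⟩ := lca_exists (T := T3) 1 y
    have hne : (1 : Fin 4) ≠ y := by rcases hy with rfl | rfl <;> decide
    have hmemeps : () ∈ epsEx 1 y := by rcases hy with rfl | rfl <;> decide
    obtain ⟨u, ⟨hzu, hune, huy⟩, hl⟩ := (hE 1 y hne z hz ()).mp hmemeps
    have hnu : T3.cluster u ≠ Set.univ := by
      intro h
      have hx1 : T3.anc u (T3.leaf 1) := by
        have h1 : (1 : Fin 4) ∈ T3.cluster u := h.symm ▸ Set.mem_univ _
        exact h1
      have hcz := hz.2.2 u hx1 huy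
      exact hune (anc_antisymm hzu hcz).symm
    rcases hmem u with h | ⟨i, h⟩
    · exact absurd h hnu
    · have hyi : y = i := by
        have hm : y ∈ T3.cluster u := huy
        rw [h, Set.mem_singleton_iff] at hm
        exact hm
      have hul := hsing u i h
      rw [hul, ← hyi] at hl
      exact hl
  have hl0 := force 0 (Or.inl rfl)
  have hl2 := force 2 (Or.inr rfl)
  have hchild : ∀ y : Fin 4, T3.parent (T3.leaf y) ≠ T3.leaf y := by
    intro y h
    have hr : T3.leaf y = T3.root := fixed_eq_root h
    have hu : ({y} : Set (Fin 4)) = Set.univ := by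
      rw [← hleafcl y, hr, cluster_root]
    exact hsinguniv y hu
  have hpnl : ∀ y : Fin 4, ¬ T3.isLeaf (T3.parent (T3.leaf y)) := by
    rintro y ⟨x, hx⟩
    have hlp := (T3.leaf_iff (T3.leaf x)).mpr ⟨x, rfl⟩
    have h1 : T3.leaf y = T3.leaf x := hlp (T3.leaf y) hx.symm
    exact hchild y (hx.symm.trans h1.symm)
  have hpau : T3.cluster (T3.parent (T3.leaf 0)) = Set.univ := huniv _ (hpnl 0)
  have hpcu : T3.cluster (T3.parent (T3.leaf 2)) = Set.univ := huniv _ (hpnl 2)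
  have step : ∀ (q : T3.V) (s : Fin 4), T3.anc q (T3.leaf s) → q ≠ T3.leaf s →
      T3.anc q (T3.parent (T3.leaf s)) := by
    rintro q s ⟨m, hm⟩ hq
    match m, hm with
    | 0, hm => exact absurd hm.symm hq
    | m + 1, hm => exact ⟨m, by rwa [Function.iterate_succ_apply] at hm⟩
  have hqne : ∀ (q : T3.V) (s : Fin 4), T3.cluster q = Set.univ → q ≠ T3.leaf s := by
    intro q s hq h
    rw [h, hleafcl s] at hq
    exact hsinguniv s hq
  have hpapc : T3.parent (T3.leaf 0) = T3.parent (T3.leaf 2) := by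
    have h1 : T3.anc (T3.parent (T3.leaf 0)) (T3.leaf 0) := ⟨1, rfl⟩
    have h2 : T3.anc (T3.parent (T3.leaf 2)) (T3.leaf 0) := by
      have hm : (0 : Fin 4) ∈ T3.cluster (T3.parent (T3.leaf 2)) := hpcu.symm ▸ Set.mem_univ _
      exact hm
    rcases anc_comparable h1 h2 with hc | hc
    · exact anc_antisymm hc (step _ 0 h2 (hqne _ 0 hpcu))
    · have h4 : T3.anc (T3.parent (T3.leaf 0)) (T3.leaf 2) := by
        have hm : (2 : Fin 4) ∈ T3.cluster (T3.parent (T3.leaf 0)) := hpau.symm ▸ Set.mem_univ _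
        exact hm
      exact anc_antisymm (step _ 2 h4 (hqne _ 2 hpau)) hc
  have hch0 : T3.childOf (T3.leaf 0) (T3.parent (T3.leaf 0)) := ⟨rfl, (hchild 0).symm⟩
  have hch2 : T3.childOf (T3.leaf 2) (T3.parent (T3.leaf 0)) := ⟨hpapc.symm, hpapc ▸ (hchild 2).symm⟩
  have heq := hC2 _ _ _ hch0 hch2 (Finset.ne_empty_of_mem hl0) (Finset.ne_empty_of_mem hl2)
  exact absurd (T3.leaf_inj heq) (by decide)

end NoT3

/-- Least-resolved trees explaining `(δ,ε)` subject to (C1)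
and (C2) are not unique in general: there is a doubly labeled tree `(T,t,λ)`
explaining some `(δ,ε)` and satisfying (C1), (C2), with consecutive inner edges
`{u,v}` and `{v,w}` (`v` a child of `u`, `w` a child of `v`), equal vertex
labels `t(u)=t(v)=t(w)` and empty edge labels, a child `u'` of `u` and a child
`w'` of `w` with nonempty edge labels and all edges below `v` empty, such that
contracting either one of the two edges preserves explanation of `(δ,ε)` and
(C1),(C2), but contracting both (i.e. removing both clusters) does not. -/
theorem statement16 :
    ∃ (L M N : Type) (δ : L → L → M) (ε : L → L → Finset N) (M0 : Set M)
      (T : PhyloTree L) (t : T.V → M) (lam : T.V → Finset N) (u v w : T.V),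
      T.ExplainsDelta t δ ∧ T.ExplainsEps lam ε ∧
      T.CondC1 t lam M0 ∧ T.CondC2 lam ∧
      T.childOf v u ∧ T.childOf w v ∧
      ¬ T.isLeaf u ∧ ¬ T.isLeaf v ∧ ¬ T.isLeaf w ∧
      t u = t v ∧ t v = t w ∧ lam v = ∅ ∧ lam w = ∅ ∧
      (∃ u' : T.V, T.childOf u' u ∧ lam u' ≠ ∅) ∧
      (∃ w' : T.V, T.childOf w' w ∧ lam w' ≠ ∅) ∧
      (∀ v' : T.V, T.childOf v' v → lam v' = ∅) ∧
      (∃ (T1 : PhyloTree L) (t1 : T1.V → M) (l1 : T1.V → Finset N),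
        PhyloTree.ContractEdge T v T1 ∧ T1.ExplainsDelta t1 δ ∧
        T1.ExplainsEps l1 ε ∧ T1.CondC1 t1 l1 M0 ∧ T1.CondC2 l1) ∧
      (∃ (T2 : PhyloTree L) (t2 : T2.V → M) (l2 : T2.V → Finset N),
        PhyloTree.ContractEdge T w T2 ∧ T2.ExplainsDelta t2 δ ∧
        T2.ExplainsEps l2 ε ∧ T2.CondC1 t2 l2 M0 ∧ T2.CondC2 l2) ∧
      ¬ ∃ (T3 : PhyloTree L) (t3 : T3.V → M) (l3 : T3.V → Finset N),
          T3.clusters = T.clusters \ {T.cluster v, T.cluster w} ∧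
          T3.ExplainsDelta t3 δ ∧ T3.ExplainsEps l3 ε ∧
          T3.CondC1 t3 l3 M0 ∧ T3.CondC2 l3 := by
  classical
  refine ⟨Fin 4, Unit, Unit, fun _ _ => (), epsEx, ∅, Tbig, fun _ => (), lamBig, 0, 1, 2,
    fun _ _ _ _ _ => rfl, expl_big,
    fun _ _ _ h => absurd h (Set.notMem_empty _), c2_big,
    ⟨by decide, by decide⟩, ⟨by decide, by decide⟩,
    ?_, ?_, ?_, rfl, rfl, by decide, by decide,
    ⟨3, ⟨by decide, by decide⟩, by decide⟩,
    ⟨5, ⟨by decide, by decide⟩, by decide⟩,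
    ?_,
    ⟨Tone, fun _ => (), lamOne, contract_one, fun _ _ _ _ _ => rfl, expl_one,
      fun _ _ _ h => absurd h (Set.notMem_empty _), c2_one⟩,
    ⟨Ttwo, fun _ => (), lamTwo, contract_two, fun _ _ _ _ _ => rfl, expl_two,
      fun _ _ _ h => absurd h (Set.notMem_empty _), c2_two⟩,
    ?_⟩
  · simp only [PhyloTree.isLeaf]; decide
  · simp only [PhyloTree.isLeaf]; decide
  · simp only [PhyloTree.isLeaf]; decide
  · simp only [PhyloTree.childOf]; decide
  · rintro ⟨T3, t3, l3, hclus, _, hE3, _, hC23⟩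
    exact no_T3 T3 l3 (hclus.trans hdiff) hE3 hC23
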